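/- For 0 < q < 1 and λ, x real with x ≠ 0, the (q,1)-Tricomi function satisfies the eigenvalue equation ∂_x (x · D_q C_0^{(q,1)}(λx)) = -λ C_0^{(q,1)}(λx), where D_q is the Jackson derivative acting on the x variable. -/

import Mathlib

/-- The q-factorial `[n]_q! = ∏_{r=1}^n (1-q^r)/(1-q)`. -/
noncomputable def qFactorial (q : ℝ) (n : ℕ) : ℝ :=
  ∏ r ∈ Finset.Icc 1 n, (1 - q ^ r) / (1 - q)

/-- The (q,1)-Tricomi function `C_0^{(q,1)}(y) = Σ_r (-y)^r/(r! [r]_q!)`. -/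
noncomputable def qTricomi (q y : ℝ) : ℝ :=
  ∑' r : ℕ, (-y) ^ r / (r.factorial * qFactorial q r)

lemma qFactorial_one_le {q : ℝ} (hq0 : 0 < q) (hq1 : q < 1) (n : ℕ) :
    1 ≤ qFactorial q n := by
  rw [qFactorial]
  calc (1:ℝ) = ∏ _r ∈ Finset.Icc 1 n, (1:ℝ) := by simp
    _ ≤ ∏ r ∈ Finset.Icc 1 n, (1 - q ^ r) / (1 - q) := by
        apply Finset.prod_le_prod (fun i _ => zero_le_one)
        intro r hr
        rw [Finset.mem_Icc] at hr
        rw [le_div_iff₀ (by linarith)]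
        have : q ^ r ≤ q := pow_le_of_le_one hq0.le hq1.le (by omega)
        linarith

lemma qFactorial_pos {q : ℝ} (hq0 : 0 < q) (hq1 : q < 1) (n : ℕ) :
    0 < qFactorial q n := lt_of_lt_of_le one_pos (qFactorial_one_le hq0 hq1 n)

lemma qFactorial_succ (q : ℝ) (n : ℕ) :
    qFactorial q (n + 1) = qFactorial q n * ((1 - q ^ (n + 1)) / (1 - q)) := by
  rw [qFactorial, Finset.prod_Icc_succ_top (by omega), ← qFactorial]

lemma summable_qTricomi {q : ℝ} (hq0 : 0 < q) (hq1 : q < 1) (y : ℝ) :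
    Summable fun r : ℕ => (-y) ^ r / (r.factorial * qFactorial q r) := by
  apply Summable.of_norm_bounded (Real.summable_pow_div_factorial |y|)
  intro r
  have h1 : (0 : ℝ) < r.factorial := by positivity
  have h2 : (0 : ℝ) < qFactorial q r := qFactorial_pos hq0 hq1 r
  rw [Real.norm_eq_abs, abs_div, abs_pow, abs_neg, abs_of_pos (mul_pos h1 h2)]
  exact div_le_div_of_nonneg_left (by positivity) h1
    (le_mul_of_one_le_right h1.le (qFactorial_one_le hq0 hq1 r))

theorem qTricomi_eigen (q : ℝ) (hq0 : 0 < q) (hq1 : q < 1)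
    (l x : ℝ) (hx : x ≠ 0) :
    deriv (fun t : ℝ =>
        t * ((qTricomi q (l * t) - qTricomi q (l * (q * t))) / ((1 - q) * t))) x
      = -l * qTricomi q (l * x) := by
  have h1q : (1 : ℝ) - q ≠ 0 := ne_of_gt (by linarith)
  set b : ℕ → ℝ := fun n => (-l) ^ (n + 1) / ((n + 1).factorial * qFactorial q n) with hb
  have hbabs : ∀ n : ℕ, |b n| ≤ |l| ^ (n + 1) / (n + 1).factorial := by
    intro n
    have h1 : (0 : ℝ) < (n + 1).factorial := by positivity
    have h2 : (0 : ℝ) < qFactorial q n := qFactorial_pos hq0 hq1 n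
    rw [hb, abs_div, abs_pow, abs_neg, abs_of_pos (mul_pos h1 h2)]
    exact div_le_div_of_nonneg_left (by positivity) h1
      (le_mul_of_one_le_right h1.le (qFactorial_one_le hq0 hq1 n))
  -- the function equals the power series ∑ b n * t^(n+1)
  have key : ∀ t : ℝ,
      t * ((qTricomi q (l * t) - qTricomi q (l * (q * t))) / ((1 - q) * t))
        = ∑' n : ℕ, b n * t ^ (n + 1) := by
    intro t
    by_cases ht : t = 0
    · simp [ht]
    · have hs1 := summable_qTricomi hq0 hq1 (l * t)
      have hs2 := summable_qTricomi hq0 hq1 (l * (q * t))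
      have step1 : t * ((qTricomi q (l * t) - qTricomi q (l * (q * t))) / ((1 - q) * t))
          = (qTricomi q (l * t) - qTricomi q (l * (q * t))) / (1 - q) := by
        field_simp
      rw [step1, qTricomi, qTricomi, ← Summable.tsum_sub hs1 hs2, ← tsum_div_const]
      have hsub : Summable fun r : ℕ =>
          ((-(l * t)) ^ r / (r.factorial * qFactorial q r)
            - (-(l * (q * t))) ^ r / (r.factorial * qFactorial q r)) / (1 - q) :=
        (hs1.sub hs2).div_const _
      rw [Summable.tsum_eq_zero_add hsub]
      rw [show ((-(l * t)) ^ 0 / ((0:ℕ).factorial * qFactorial q 0)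
            - (-(l * (q * t))) ^ 0 / ((0:ℕ).factorial * qFactorial q 0)) / (1 - q)
          = 0 by simp]
      rw [zero_add]
      apply tsum_congr
      intro n
      have hqn : (1 : ℝ) - q ^ (n + 1) ≠ 0 := by
        have : q ^ (n + 1) < 1 := pow_lt_one₀ hq0.le hq1 (Nat.succ_ne_zero n)
        linarith
      have hqf : qFactorial q n ≠ 0 := (qFactorial_pos hq0 hq1 n).ne'
      have hfac : ((n + 1).factorial : ℝ) ≠ 0 := by positivity
      have e1 : (-(l * (q * t))) = q * (-(l * t)) := by ring
      have e2 : (-(l * t)) ^ (n + 1) = (-l) ^ (n + 1) * t ^ (n + 1) := by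
        rw [← mul_pow]; ring_nf
      simp only [hb]
      rw [qFactorial_succ, e1, mul_pow, e2]
      field_simp
  -- differentiate the series
  set R : ℝ := |x| + 1 with hR
  have hR0 : (0 : ℝ) < R := by positivity
  have hu : Summable fun n : ℕ => |l| * ((|l| * R) ^ n / n.factorial) :=
    (Real.summable_pow_div_factorial (|l| * R)).mul_left _
  have HD : HasDerivAt (fun z : ℝ => ∑' n : ℕ, b n * z ^ (n + 1))
      (∑' n : ℕ, b n * (((n : ℝ) + 1) * x ^ n)) x := by
    apply hasDerivAt_tsum_of_isPreconnected hu Metric.isOpen_ball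
      (convex_ball (0 : ℝ) R).isPreconnected
      (g' := fun n y => b n * (((n : ℝ) + 1) * y ^ n))
      (y₀ := (0 : ℝ))
    · intro n y _
      have := (hasDerivAt_pow (n + 1) y).const_mul (b n)
      simpa using this
    · intro n y hy
      have hyR : |y| ≤ R := by
        rw [Metric.mem_ball, dist_zero_right, Real.norm_eq_abs] at hy
        linarith
      have habs : ‖b n * (((n : ℝ) + 1) * y ^ n)‖
          = |b n| * (((n : ℝ) + 1) * |y| ^ n) := by
        rw [Real.norm_eq_abs, abs_mul, abs_mul, abs_pow,
          abs_of_nonneg (by positivity : (0:ℝ) ≤ (n : ℝ) + 1)]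
      rw [habs]
      calc |b n| * (((n : ℝ) + 1) * |y| ^ n)
          ≤ (|l| ^ (n + 1) / (n + 1).factorial) * (((n : ℝ) + 1) * R ^ n) := by
            gcongr
            exact hbabs n
        _ = |l| * ((|l| * R) ^ n / n.factorial) := by
            rw [Nat.factorial_succ, mul_pow, pow_succ]
            have hfn : (n.factorial : ℝ) ≠ 0 := by positivity
            have : ((n : ℝ) + 1) ≠ 0 := by positivity
            push_cast
            field_simp
    · exact Metric.mem_ball_self hR0
    · simpa using summable_zero
    · rw [Metric.mem_ball, dist_zero_right, Real.norm_eq_abs]; linarith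
  rw [funext key, HD.deriv]
  -- evaluate the derivative series
  rw [qTricomi, ← tsum_mul_left]
  apply tsum_congr
  intro n
  have hqf : qFactorial q n ≠ 0 := (qFactorial_pos hq0 hq1 n).ne'
  have hfn : (n.factorial : ℝ) ≠ 0 := by positivity
  have hn1 : ((n : ℝ) + 1) ≠ 0 := by positivity
  have e1 : (-(l * x)) ^ n = (-l) ^ n * x ^ n := by rw [← mul_pow]; ring_nf
  simp only [hb]
  rw [Nat.factorial_succ, pow_succ, e1]
  push_cast
  field_simp
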